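/- Let p ≥ 3 be an integer, let θ be a unit vector in ℝ^p, and let μ be a probability measure on the unit sphere S^{p−1} ⊂ ℝ^p that is rotationally symmetric about θ. Then for every unit vector θ₀ ∈ ℝ^p, ∫_{S^{p−1}} (x'θ₀)⁴ dμ(x) = e₄ (θ'θ₀)⁴ + (6(e₂ − e₄)/(p−1)) (θ'θ₀)² (1 − (θ'θ₀)²) + (3 f₄/(p²−1)) (1 − (θ'θ₀)²)², where e₂ := ∫ (x'θ)² dμ(x), e₄ := ∫ (x'θ)⁴ dμ(x), and f₄ := ∫ (1 − (x'θ)²)² dμ(x). -/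

import Mathlib

open Matrix MeasureTheory

namespace FMAux

variable {p : ℕ}

/-- Householder reflection. -/
noncomputable def refl (v : Fin p → ℝ) : Matrix (Fin p) (Fin p) ℝ :=
  1 - (2 : ℝ) • vecMulVec v v

lemma refl_transpose (v : Fin p → ℝ) : (refl v)ᵀ = refl v := by
  ext i j
  simp [refl, vecMulVec_apply, transpose_apply, mul_comm, Matrix.one_apply]
  simp [eq_comm]

lemma vecMulVec_mul_vecMulVec (v w x y : Fin p → ℝ) :
    vecMulVec v w * vecMulVec x y = (w ⬝ᵥ x) • vecMulVec v y := by
  ext i j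
  simp only [mul_apply, vecMulVec_apply, Matrix.smul_apply, dotProduct, smul_eq_mul,
    Finset.mul_sum, Finset.sum_mul]
  apply Finset.sum_congr rfl
  intro k _
  ring

lemma refl_mul_self {v : Fin p → ℝ} (hv : v ⬝ᵥ v = 1) : refl v * refl v = 1 := by
  have h := vecMulVec_mul_vecMulVec v v v v
  rw [hv, one_smul] at h
  simp only [refl, sub_mul, mul_sub, one_mul, mul_one, Matrix.smul_mul, Matrix.mul_smul, h,
    smul_smul]
  ext i j
  simp only [Matrix.sub_apply, one_apply, Matrix.smul_apply, smul_eq_mul]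
  ring

lemma refl_mem {v : Fin p → ℝ} (hv : v ⬝ᵥ v = 1) :
    refl v ∈ Matrix.orthogonalGroup (Fin p) ℝ := by
  rw [Matrix.mem_orthogonalGroup_iff]
  rw [refl_transpose]
  exact refl_mul_self hv

lemma refl_det {v : Fin p → ℝ} (hv : v ⬝ᵥ v = 1) : (refl v).det = -1 := by
  have : refl v = 1 + vecMulVec ((-2 : ℝ) • v) v := by
    ext i j
    simp [refl, vecMulVec_apply]
    ring
  rw [this, vecMulVec_eq (Fin 1), det_one_add_replicateCol_mul_replicateRow]
  have : (v ⬝ᵥ (-2 : ℝ) • v) = -2 := by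
    rw [dotProduct_smul, hv]; simp
  rw [this]; ring

lemma refl_mulVec (v x : Fin p → ℝ) : refl v *ᵥ x = x - (2 * (v ⬝ᵥ x)) • v := by
  have h : vecMulVec v v *ᵥ x = (v ⬝ᵥ x) • v := by
    ext i
    simp only [mulVec, dotProduct, vecMulVec_apply, Pi.smul_apply, smul_eq_mul, Finset.mul_sum]
    rw [Finset.sum_mul]
    apply Finset.sum_congr rfl
    intros; ring
  rw [refl, sub_mulVec, smul_mulVec, h, one_mulVec, smul_smul]

lemma exists_perp (hp : 3 ≤ p) (a b : Fin p → ℝ) :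
    ∃ z : Fin p → ℝ, z ⬝ᵥ z = 1 ∧ z ⬝ᵥ a = 0 ∧ z ⬝ᵥ b = 0 := by
  set L : (Fin p → ℝ) →ₗ[ℝ] ℝ × ℝ :=
    { toFun := fun x => (a ⬝ᵥ x, b ⬝ᵥ x)
      map_add' := by intro x y; simp [dotProduct_add]
      map_smul' := by intro c x; simp [dotProduct_smul, smul_eq_mul, Prod.smul_mk] } with hL
  have hker : LinearMap.ker L ≠ ⊥ := by
    intro h
    have hinj : Function.Injective L := LinearMap.ker_eq_bot.mp h
    have := LinearMap.finrank_le_finrank_of_injective hinj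
    rw [Module.finrank_fin_fun] at this
    have h2 : Module.finrank ℝ (ℝ × ℝ) = 2 := by simp
    omega
  obtain ⟨z, hz, hz0⟩ := Submodule.exists_mem_ne_zero_of_ne_bot hker
  have hzz : z ⬝ᵥ z ≠ 0 := fun h => hz0 (dotProduct_self_eq_zero.mp h)
  have hzpos : 0 < z ⬝ᵥ z := by
    rcases lt_or_gt_of_ne hzz with h | h
    · exfalso
      have : 0 ≤ z ⬝ᵥ z := Finset.sum_nonneg fun i _ => mul_self_nonneg _
      linarith
    · exact h
  have hmem := (LinearMap.mem_ker.mp hz)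
  have ha : a ⬝ᵥ z = 0 := congrArg Prod.fst hmem
  have hb : b ⬝ᵥ z = 0 := congrArg Prod.snd hmem
  refine ⟨(Real.sqrt (z ⬝ᵥ z))⁻¹ • z, ?_, ?_, ?_⟩
  · rw [smul_dotProduct, dotProduct_smul, smul_eq_mul, smul_eq_mul]
    rw [← mul_assoc, ← mul_inv]
    rw [Real.mul_self_sqrt hzpos.le]
    field_simp
  · rw [smul_dotProduct, dotProduct_comm z a, ha, smul_zero]
  · rw [smul_dotProduct, dotProduct_comm z b, hb, smul_zero]

lemma refl_mulVec_of_perp {v x : Fin p → ℝ} (h : v ⬝ᵥ x = 0) : refl v *ᵥ x = x := by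
  rw [refl_mulVec, h, mul_zero, zero_smul, sub_zero]

lemma sq_inv_sqrt {d : ℝ} (hd : 0 < d) : (Real.sqrt d)⁻¹ * (Real.sqrt d)⁻¹ = d⁻¹ := by
  rw [← mul_inv, Real.mul_self_sqrt hd.le]

lemma normalized_unit {z : Fin p → ℝ} (hz : 0 < z ⬝ᵥ z) :
    ((Real.sqrt (z ⬝ᵥ z))⁻¹ • z) ⬝ᵥ ((Real.sqrt (z ⬝ᵥ z))⁻¹ • z) = 1 := by
  rw [smul_dotProduct, dotProduct_smul, smul_eq_mul, smul_eq_mul, ← mul_assoc,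
    sq_inv_sqrt hz]
  field_simp

lemma dotProduct_pos_of_ne_zero {z : Fin p → ℝ} (hz : z ≠ 0) : 0 < z ⬝ᵥ z := by
  rcases lt_or_eq_of_le (Finset.sum_nonneg fun i _ => mul_self_nonneg (z i) :
      (0:ℝ) ≤ z ⬝ᵥ z) with h | h
  · exact h
  · exact absurd (dotProduct_self_eq_zero.mp h.symm) hz

lemma exists_rot (hp : 3 ≤ p) {θ v w : Fin p → ℝ} (hθ : θ ⬝ᵥ θ = 1) (hv : v ⬝ᵥ v = 1)
    (hw : w ⬝ᵥ w = 1) (hvθ : v ⬝ᵥ θ = 0) (hwθ : w ⬝ᵥ θ = 0) :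
    ∃ O : Matrix (Fin p) (Fin p) ℝ, O ∈ Matrix.orthogonalGroup (Fin p) ℝ ∧ O.det = 1 ∧
      O *ᵥ θ = θ ∧ O *ᵥ w = v := by
  obtain ⟨z, hz1, hzθ, hzv⟩ := exists_perp hp θ v
  by_cases hvw : v = w
  · exact ⟨1, one_mem _, det_one, by simp, by simp [hvw]⟩
  · set d := v - w with hdd
    have hdne : d ≠ 0 := sub_ne_zero.mpr hvw
    have hd2 : d ⬝ᵥ d = 2 - 2 * (v ⬝ᵥ w) := by
      simp only [hdd, sub_dotProduct, dotProduct_sub, hv, hw]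
      rw [dotProduct_comm w v]; ring
    have hdpos : 0 < d ⬝ᵥ d := dotProduct_pos_of_ne_zero hdne
    set c := (Real.sqrt (d ⬝ᵥ d))⁻¹ with hc
    set u := c • d with hu
    have hu1 : u ⬝ᵥ u = 1 := normalized_unit hdpos
    have huθ : u ⬝ᵥ θ = 0 := by
      rw [hu, smul_dotProduct, hdd, sub_dotProduct, hvθ, hwθ]; simp
    have hdw : d ⬝ᵥ w = (v ⬝ᵥ w) - 1 := by
      rw [hdd, sub_dotProduct, hw]
    have hsne : Real.sqrt (d ⬝ᵥ d) ≠ 0 := by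
      positivity
    have hss : Real.sqrt (d ⬝ᵥ d) * Real.sqrt (d ⬝ᵥ d) = d ⬝ᵥ d := Real.mul_self_sqrt hdpos.le
    have hrw : refl u *ᵥ w = v := by
      have h1 : u ⬝ᵥ w = c * (d ⬝ᵥ w) := by rw [hu, smul_dotProduct]; rfl
      have h3 : 2 * (u ⬝ᵥ w) = -Real.sqrt (d ⬝ᵥ d) := by
        rw [h1, hdw, hc]
        have hvw1 : v ⬝ᵥ w - 1 = -(d ⬝ᵥ d) / 2 := by rw [hd2]; ring
        rw [hvw1]
        field_simp
        linarith [hss]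
      have h4 : (2 * (u ⬝ᵥ w)) • u = -d := by
        rw [h3, hu, smul_smul, hc]
        rw [show -Real.sqrt (d ⬝ᵥ d) * (Real.sqrt (d ⬝ᵥ d))⁻¹ = -1 by field_simp]
        simp
      rw [refl_mulVec, h4, sub_neg_eq_add, hdd]
      abel
    refine ⟨refl z * refl u, mul_mem (refl_mem hz1) (refl_mem hu1), ?_, ?_, ?_⟩
    · rw [det_mul, refl_det hz1, refl_det hu1]; ring
    · rw [← mulVec_mulVec, refl_mulVec_of_perp huθ, refl_mulVec_of_perp hzθ]
    · rw [← mulVec_mulVec, hrw, refl_mulVec_of_perp hzv]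

lemma exists_flip (hp : 3 ≤ p) {θ η : Fin p → ℝ} (hθ : θ ⬝ᵥ θ = 1) (hη : η ⬝ᵥ η = 1)
    (hηθ : η ⬝ᵥ θ = 0) :
    ∃ O : Matrix (Fin p) (Fin p) ℝ, O ∈ Matrix.orthogonalGroup (Fin p) ℝ ∧ O.det = 1 ∧
      O *ᵥ θ = θ ∧ O *ᵥ η = -η := by
  obtain ⟨z, hz1, hzθ, hzη⟩ := exists_perp hp θ η
  refine ⟨refl z * refl η, mul_mem (refl_mem hz1) (refl_mem hη), ?_, ?_, ?_⟩
  · rw [det_mul, refl_det hz1, refl_det hη]; ring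
  · rw [← mulVec_mulVec, refl_mulVec_of_perp hηθ,
      refl_mulVec_of_perp hzθ]
  · have : refl η *ᵥ η = -η := by
      rw [refl_mulVec, hη]; ext i; simp; ring
    rw [← mulVec_mulVec, this]
    have : z ⬝ᵥ (-η) = 0 := by rw [dotProduct_neg, hzη, neg_zero]
    rw [refl_mulVec_of_perp this]

lemma transpose_mulVec {O : Matrix (Fin p) (Fin p) ℝ}
    (hO : O ∈ Matrix.orthogonalGroup (Fin p) ℝ) {x y : Fin p → ℝ} (h : O *ᵥ x = y) :
    Oᵀ *ᵥ y = x := by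
  have hOO : Oᵀ * O = 1 := by
    have := (Matrix.mem_orthogonalGroup_iff' (Fin p) ℝ).mp hO
    exact this
  rw [← h, mulVec_mulVec, hOO, one_mulVec]

lemma mulVec_dot (O : Matrix (Fin p) (Fin p) ℝ) (x y : Fin p → ℝ) :
    (O *ᵥ x) ⬝ᵥ y = x ⬝ᵥ (Oᵀ *ᵥ y) := by
  simp only [dotProduct, mulVec, dotProduct, transpose_apply, Finset.sum_mul, Finset.mul_sum]
  rw [Finset.sum_comm]
  apply Finset.sum_congr rfl
  intro i _
  apply Finset.sum_congr rfl
  intro j _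
  ring

lemma euclid_inner_eq (x y : EuclideanSpace ℝ (Fin p)) :
    (inner ℝ x y : ℝ) = (x : Fin p → ℝ) ⬝ᵥ (y : Fin p → ℝ) := by
  simp [PiLp.inner_apply, RCLike.inner_apply, dotProduct, mul_comm]

lemma exists_onb (hp : 3 ≤ p) {θ η : Fin p → ℝ} (hθ : θ ⬝ᵥ θ = 1) (hη : η ⬝ᵥ η = 1)
    (hηθ : η ⬝ᵥ θ = 0) :
    ∃ b : Fin p → (Fin p → ℝ), b ⟨0, by omega⟩ = θ ∧ b ⟨1, by omega⟩ = η ∧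
      (∀ i j, b i ⬝ᵥ b j = if i = j then 1 else 0) ∧
      (∀ x : Fin p → ℝ, ∑ i, (x ⬝ᵥ b i) ^ 2 = x ⬝ᵥ x) := by
  set i₀ : Fin p := ⟨0, by omega⟩
  set i₁ : Fin p := ⟨1, by omega⟩
  have hne : i₀ ≠ i₁ := by simp [i₀, i₁, Fin.ext_iff]
  set E := EuclideanSpace ℝ (Fin p)
  set v : Fin p → E := fun i => WithLp.toLp 2 (if i = i₀ then (θ : Fin p → ℝ) else (η : Fin p → ℝ)) with hv
  set s : Set (Fin p) := {i₀, i₁} with hs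
  have hval : ∀ i ∈ s, (v i : Fin p → ℝ) = if i = i₀ then θ else η := fun i _ => rfl
  have horth : Orthonormal ℝ (s.restrict v) := by
    rw [orthonormal_iff_ite]
    rintro ⟨i, hi⟩ ⟨j, hj⟩
    rw [euclid_inner_eq]
    change (v i).ofLp ⬝ᵥ (v j).ofLp = if (⟨i, hi⟩ : s) = ⟨j, hj⟩ then 1 else 0
    have hv0 : (v i₀ : Fin p → ℝ) = θ := by simp [hv]
    have hv1 : (v i₁ : Fin p → ℝ) = η := by simp [hv, Ne.symm hne]
    rcases hi with hi | hi <;> rcases hj with hj | hj <;> subst hi <;> subst hj <;>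
        simp only [Subtype.ext_iff, hv0, hv1]
    · simp [hθ]
    · simp [hne, dotProduct_comm θ η, hηθ, Ne.symm hne]
    · simp [Ne.symm hne, hηθ]
    · simp [hη]
  have hcard : Module.finrank ℝ E = Fintype.card (Fin p) := by
    simp [E]
  obtain ⟨b, hb⟩ := horth.exists_orthonormalBasis_extension_of_card_eq hcard
  refine ⟨fun i => (b i : Fin p → ℝ), ?_, ?_, ?_, ?_⟩
  · show (b i₀ : Fin p → ℝ) = θ
    rw [hb i₀ (by simp [s])]
    simp [hv]
  · show (b i₁ : Fin p → ℝ) = η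
    rw [hb i₁ (by simp [s])]
    simp [hv, Ne.symm hne]
  · intro i j
    have := (orthonormal_iff_ite.mp b.orthonormal) i j
    rw [euclid_inner_eq] at this
    exact this
  · intro x
    let x' : E := WithLp.toLp 2 x
    have h := b.sum_inner_mul_inner x' x'
    have h2 : ∀ i, (inner ℝ x' (b i) : ℝ) * inner ℝ (b i) x' = (x ⬝ᵥ (b i : Fin p → ℝ)) ^ 2 := by
      intro i
      rw [real_inner_comm (b i) x', euclid_inner_eq, dotProduct_comm]
      ring
    rw [Finset.sum_congr rfl fun i _ => h2 i, euclid_inner_eq] at h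
    exact h

lemma continuous_dot (v : Fin p → ℝ) : Continuous fun x : Fin p → ℝ => x ⬝ᵥ v := by
  unfold dotProduct
  exact continuous_finset_sum _ fun i _ => (continuous_apply i).mul continuous_const

lemma abs_dot_le {x v : Fin p → ℝ} (hx : x ⬝ᵥ x = 1) (hv : v ⬝ᵥ v = 1) : |x ⬝ᵥ v| ≤ 1 := by
  have h := Finset.sum_mul_sq_le_sq_mul_sq Finset.univ x v
  have hx2 : ∑ i, x i ^ 2 = 1 := by
    rw [← hx]; apply Finset.sum_congr rfl; intros; rw [sq]
  have hv2 : ∑ i, v i ^ 2 = 1 := by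
    rw [← hv]; apply Finset.sum_congr rfl; intros; rw [sq]
  rw [hx2, hv2, one_mul] at h
  have : (x ⬝ᵥ v) ^ 2 ≤ 1 := h
  rw [abs_le]
  constructor <;> nlinarith

variable (μ : Measure (Fin p → ℝ)) [IsProbabilityMeasure μ]

lemma integrable_bounded (hsphere : ∀ᵐ x ∂μ, x ⬝ᵥ x = 1) {f : (Fin p → ℝ) → ℝ} {C : ℝ}
    (hf : Continuous f) (h : ∀ x : Fin p → ℝ, x ⬝ᵥ x = 1 → |f x| ≤ C) :
    Integrable f μ := by
  refine Integrable.mono' (integrable_const C) hf.aestronglyMeasurable ?_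
  filter_upwards [hsphere] with x hx
  rw [Real.norm_eq_abs]
  exact h x hx

lemma integrable_dots (hsphere : ∀ᵐ x ∂μ, x ⬝ᵥ x = 1) {v w : Fin p → ℝ}
    (hv : v ⬝ᵥ v = 1) (hw : w ⬝ᵥ w = 1) (a b : ℕ) :
    Integrable (fun x => (x ⬝ᵥ v) ^ a * (x ⬝ᵥ w) ^ b) μ := by
  refine integrable_bounded μ hsphere
    (((continuous_dot v).pow a).mul ((continuous_dot w).pow b)) (C := 1) ?_
  intro x hx
  rw [abs_mul, abs_pow, abs_pow]
  calc |x ⬝ᵥ v| ^ a * |x ⬝ᵥ w| ^ b ≤ 1 ^ a * 1 ^ b := by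
        apply mul_le_mul
        · exact pow_le_pow_left₀ (abs_nonneg _) (abs_dot_le hx hv) a
        · exact pow_le_pow_left₀ (abs_nonneg _) (abs_dot_le hx hw) b
        · positivity
        · positivity
    _ = 1 := by norm_num

lemma integrable_pow (hsphere : ∀ᵐ x ∂μ, x ⬝ᵥ x = 1) {v : Fin p → ℝ}
    (hv : v ⬝ᵥ v = 1) (a : ℕ) :
    Integrable (fun x => (x ⬝ᵥ v) ^ a) μ := by
  refine integrable_bounded μ hsphere ((continuous_dot v).pow a) (C := 1) ?_
  intro x hx
  rw [abs_pow]
  calc |x ⬝ᵥ v| ^ a ≤ 1 ^ a := pow_le_pow_left₀ (abs_nonneg _) (abs_dot_le hx hv) a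
    _ = 1 := one_pow a

lemma integral_three (f g h : (Fin p → ℝ) → ℝ) (hf : Integrable f μ) (hg : Integrable g μ)
    (hh : Integrable h μ) :
    ∫ x, (f x + g x + h x) ∂μ = (∫ x, f x ∂μ) + (∫ x, g x ∂μ) + ∫ x, h x ∂μ := by
  have h1 := integral_add (hf.add hg) hh
  simp only [Pi.add_apply] at h1
  rw [integral_add hf hg] at h1
  exact h1

lemma integral_comp_mulVec {O : Matrix (Fin p) (Fin p) ℝ}
    (hmap : Measure.map (fun x => O.mulVec x) μ = μ) {f : (Fin p → ℝ) → ℝ}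
    (hf : Continuous f) :
    ∫ x, f x ∂μ = ∫ x, f (O *ᵥ x) ∂μ := by
  conv_lhs => rw [← hmap]
  rw [integral_map (by exact (continuous_const.matrix_mulVec continuous_id).aemeasurable)
    hf.aestronglyMeasurable]

lemma moment_inv (θ : Fin p → ℝ)
    (hrot : ∀ O : Matrix (Fin p) (Fin p) ℝ,
      O ∈ Matrix.orthogonalGroup (Fin p) ℝ → O.det = 1 → O.mulVec θ = θ →
        Measure.map (fun x => O.mulVec x) μ = μ)
    {O : Matrix (Fin p) (Fin p) ℝ} (hO : O ∈ Matrix.orthogonalGroup (Fin p) ℝ)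
    (hdet : O.det = 1) (hfix : O *ᵥ θ = θ) {v w : Fin p → ℝ} (hvw : O *ᵥ w = v) (a b : ℕ) :
    ∫ x, (x ⬝ᵥ θ) ^ a * (x ⬝ᵥ v) ^ b ∂μ = ∫ x, (x ⬝ᵥ θ) ^ a * (x ⬝ᵥ w) ^ b ∂μ := by
  rw [integral_comp_mulVec μ (hrot O hO hdet hfix) (f := fun x => (x ⬝ᵥ θ) ^ a * (x ⬝ᵥ v) ^ b)
    (((continuous_dot θ).pow a).mul ((continuous_dot v).pow b))]
  congr 1
  funext x
  rw [mulVec_dot, mulVec_dot, transpose_mulVec hO hfix, transpose_mulVec hO hvw]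

end FMAux

open FMAux

set_option maxHeartbeats 1000000 in
theorem fourth_moment_rotationally_symmetric (p : ℕ) (hp : 3 ≤ p)
    (θ : Fin p → ℝ) (hθ : θ ⬝ᵥ θ = 1)
    (μ : Measure (Fin p → ℝ)) [IsProbabilityMeasure μ]
    (hsphere : ∀ᵐ x ∂μ, x ⬝ᵥ x = 1)
    (hrot : ∀ O : Matrix (Fin p) (Fin p) ℝ,
      O ∈ Matrix.orthogonalGroup (Fin p) ℝ → O.det = 1 → O.mulVec θ = θ →
        Measure.map (fun x => O.mulVec x) μ = μ)
    (θ₀ : Fin p → ℝ) (hθ₀ : θ₀ ⬝ᵥ θ₀ = 1) :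
    ∫ x, (x ⬝ᵥ θ₀) ^ 4 ∂μ =
      (∫ x, (x ⬝ᵥ θ) ^ 4 ∂μ) * (θ ⬝ᵥ θ₀) ^ 4 +
        (6 * ((∫ x, (x ⬝ᵥ θ) ^ 2 ∂μ) - ∫ x, (x ⬝ᵥ θ) ^ 4 ∂μ) / ((p : ℝ) - 1)) *
          (θ ⬝ᵥ θ₀) ^ 2 * (1 - (θ ⬝ᵥ θ₀) ^ 2) +
        (3 * (∫ x, (1 - (x ⬝ᵥ θ) ^ 2) ^ 2 ∂μ) / ((p : ℝ) ^ 2 - 1)) *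
          (1 - (θ ⬝ᵥ θ₀) ^ 2) ^ 2 := by
  set c := θ ⬝ᵥ θ₀ with hc_def
  have hθθ₀ : θ₀ ⬝ᵥ θ = c := dotProduct_comm θ₀ θ
  have hw2 : (θ₀ - c • θ) ⬝ᵥ (θ₀ - c • θ) = 1 - c ^ 2 := by
    simp only [sub_dotProduct, dotProduct_sub, dotProduct_smul, smul_dotProduct, smul_eq_mul,
      hθ, hθ₀, hθθ₀, ← hc_def]
    ring
  by_cases hcase : 1 - c ^ 2 = 0
  · -- degenerate case : θ₀ = ± θ
    have h0 : (θ₀ - c • θ) ⬝ᵥ (θ₀ - c • θ) = 0 := by rw [hw2, hcase]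
    have hw0 : θ₀ = c • θ := sub_eq_zero.mp (dotProduct_self_eq_zero.mp h0)
    rw [hcase]
    have hLHS : ∀ x : Fin p → ℝ, x ⬝ᵥ θ₀ = c * (x ⬝ᵥ θ) := by
      intro x
      rw [hw0, dotProduct_smul, smul_eq_mul]
    calc ∫ x, (x ⬝ᵥ θ₀) ^ 4 ∂μ = ∫ x, c ^ 4 * (x ⬝ᵥ θ) ^ 4 ∂μ := by
          congr 1; funext x; rw [hLHS x]; ring
      _ = c ^ 4 * ∫ x, (x ⬝ᵥ θ) ^ 4 ∂μ := integral_const_mul _ _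
      _ = _ := by ring
  · -- main case
    have hwnn : 0 ≤ 1 - c ^ 2 := by
      rw [← hw2]
      exact Finset.sum_nonneg fun i _ => mul_self_nonneg _
    have hcpos : 0 < 1 - c ^ 2 := lt_of_le_of_ne hwnn (Ne.symm hcase)
    set s := Real.sqrt (1 - c ^ 2) with hs_def
    have hs2 : s ^ 2 = 1 - c ^ 2 := Real.sq_sqrt hcpos.le
    have hs0 : s ≠ 0 := by rw [hs_def]; positivity
    set η := s⁻¹ • (θ₀ - c • θ) with hη_def
    have hηη : η ⬝ᵥ η = 1 := by
      rw [hη_def, smul_dotProduct, dotProduct_smul, hw2, smul_eq_mul, smul_eq_mul, ← hs2]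
      field_simp
    have hηθ : η ⬝ᵥ θ = 0 := by
      simp [hη_def, smul_dotProduct, sub_dotProduct, smul_dotProduct, hθθ₀, hθ, smul_eq_mul]
    have hθ₀eq : θ₀ = c • θ + s • η := by
      rw [hη_def, smul_smul, mul_inv_cancel₀ hs0, one_smul]
      abel
    have hdot : ∀ x : Fin p → ℝ, x ⬝ᵥ θ₀ = c * (x ⬝ᵥ θ) + s * (x ⬝ᵥ η) := by
      intro x
      conv_lhs => rw [hθ₀eq]
      rw [dotProduct_add, dotProduct_smul, dotProduct_smul, smul_eq_mul, smul_eq_mul]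
    obtain ⟨b, hb0, hb1, hbij, hpars⟩ := exists_onb hp hθ hηη hηθ
    set i₀ : Fin p := ⟨0, by omega⟩ with hi₀_def
    have hb0' : b i₀ = θ := hb0
    have hunit : ∀ i, b i ⬝ᵥ b i = 1 := fun i => by rw [hbij]; simp
    have hperpθ : ∀ i, i ≠ i₀ → b i ⬝ᵥ θ = 0 := fun i hi => by
      rw [← hb0', hbij]; simp [hi]
    set e2 := ∫ x, (x ⬝ᵥ θ) ^ 2 ∂μ with he2
    set e4 := ∫ x, (x ⬝ᵥ θ) ^ 4 ∂μ with he4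
    set f4 := ∫ x, (1 - (x ⬝ᵥ θ) ^ 2) ^ 2 ∂μ with hf4
    set T := ∫ x, (x ⬝ᵥ θ) ^ 2 * (x ⬝ᵥ η) ^ 2 ∂μ with hT
    set Q := ∫ x, (x ⬝ᵥ θ) ^ 0 * (x ⬝ᵥ η) ^ 4 ∂μ with hQ
    have hsame4 : ∀ v, v ⬝ᵥ v = 1 → v ⬝ᵥ θ = 0 → ∫ x, (x ⬝ᵥ v) ^ 4 ∂μ = Q := by
      intro v hv hvθ
      obtain ⟨O, hO, hdet, hfix, hOw⟩ := exists_rot hp hθ hv hηη hvθ hηθ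
      have h := moment_inv μ θ hrot hO hdet hfix hOw 0 4
      rw [hQ]
      rw [← h]
      congr 1
      funext x
      rw [pow_zero, one_mul]
    have hsame2 : ∀ v, v ⬝ᵥ v = 1 → v ⬝ᵥ θ = 0 → ∫ x, (x ⬝ᵥ θ) ^ 2 * (x ⬝ᵥ v) ^ 2 ∂μ = T := by
      intro v hv hvθ
      obtain ⟨O, hO, hdet, hfix, hOw⟩ := exists_rot hp hθ hv hηη hvθ hηθ
      exact moment_inv μ θ hrot hO hdet hfix hOw 2 2
    have hQ4 : ∀ i, i ≠ i₀ → ∫ x, (x ⬝ᵥ b i) ^ 4 ∂μ = Q := fun i hi =>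
      hsame4 _ (hunit i) (hperpθ i hi)
    have hcross : ∀ i j, i ≠ j → i ≠ i₀ → j ≠ i₀ →
        ∫ x, (x ⬝ᵥ b i) ^ 2 * (x ⬝ᵥ b j) ^ 2 ∂μ = Q / 3 := by
      intro i j hij hi hj
      have hbixj : b i ⬝ᵥ b j = 0 := by rw [hbij]; simp [hij]
      set r := (Real.sqrt 2)⁻¹ with hr_def
      have h2pos : (0:ℝ) < 2 := by norm_num
      have hr2 : r ^ 2 = 1 / 2 := by
        rw [hr_def, inv_pow, Real.sq_sqrt h2pos.le]
        norm_num
      have hr4 : r ^ 4 = 1 / 4 := by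
        rw [show (4:ℕ) = 2 * 2 from rfl, pow_mul, hr2]; norm_num
      set uP := r • (b i + b j) with hup_def
      set uM := r • (b i - b j) with hum_def
      have hdup : ∀ x : Fin p → ℝ, x ⬝ᵥ uP = r * ((x ⬝ᵥ b i) + (x ⬝ᵥ b j)) := by
        intro x
        rw [hup_def, dotProduct_smul, dotProduct_add, smul_eq_mul]
      have hdum : ∀ x : Fin p → ℝ, x ⬝ᵥ uM = r * ((x ⬝ᵥ b i) - (x ⬝ᵥ b j)) := by
        intro x
        rw [hum_def, dotProduct_smul, dotProduct_sub, smul_eq_mul]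
      have huPu : uP ⬝ᵥ uP = 1 := by
        rw [hup_def, smul_dotProduct, dotProduct_smul, smul_eq_mul, smul_eq_mul, add_dotProduct,
          dotProduct_add, dotProduct_add, hunit i, hunit j, hbixj, dotProduct_comm (b j) (b i),
          hbixj]
        rw [show (1 + 0 + (0 + 1) : ℝ) = 2 by norm_num, ← mul_assoc]
        nlinarith [hr2]
      have huMu : uM ⬝ᵥ uM = 1 := by
        rw [hum_def, smul_dotProduct, dotProduct_smul, smul_eq_mul, smul_eq_mul, sub_dotProduct,
          dotProduct_sub, dotProduct_sub, hunit i, hunit j, hbixj, dotProduct_comm (b j) (b i),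
          hbixj]
        rw [show (1 - 0 - (0 - 1) : ℝ) = 2 by norm_num, ← mul_assoc]
        nlinarith [hr2]
      have huPθ : uP ⬝ᵥ θ = 0 := by
        rw [hup_def, smul_dotProduct, add_dotProduct, hperpθ i hi, hperpθ j hj, add_zero,
          smul_zero]
      have huMθ : uM ⬝ᵥ θ = 0 := by
        rw [hum_def, smul_dotProduct, sub_dotProduct, hperpθ i hi, hperpθ j hj, sub_zero,
          smul_zero]
      have hPP := hsame4 uP huPu huPθ
      have hMM := hsame4 uM huMu huMθ
      have hint : ∫ x, ((x ⬝ᵥ uP) ^ 4 + (x ⬝ᵥ uM) ^ 4) ∂μ = Q + Q := by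
        rw [integral_add (integrable_pow μ hsphere huPu 4) (integrable_pow μ hsphere huMu 4),
          hPP, hMM]
      have hint2 : ∫ x, ((x ⬝ᵥ uP) ^ 4 + (x ⬝ᵥ uM) ^ 4) ∂μ
          = (1/2) * (∫ x, (x ⬝ᵥ b i) ^ 4 ∂μ) + 3 * (∫ x, (x ⬝ᵥ b i) ^ 2 * (x ⬝ᵥ b j) ^ 2 ∂μ)
            + (1/2) * (∫ x, (x ⬝ᵥ b j) ^ 4 ∂μ) := by
        have heq : (fun x => (x ⬝ᵥ uP) ^ 4 + (x ⬝ᵥ uM) ^ 4)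
            = fun x => (1/2) * (x ⬝ᵥ b i) ^ 4 + 3 * ((x ⬝ᵥ b i) ^ 2 * (x ⬝ᵥ b j) ^ 2)
              + (1/2) * (x ⬝ᵥ b j) ^ 4 := by
          funext x
          rw [hdup x, hdum x, mul_pow, mul_pow, hr4]
          ring
        rw [heq]
        have h3 : ∫ x, ((1:ℝ)/2 * (x ⬝ᵥ b i) ^ 4 + 3 * ((x ⬝ᵥ b i) ^ 2 * (x ⬝ᵥ b j) ^ 2)
              + (1:ℝ)/2 * (x ⬝ᵥ b j) ^ 4) ∂μ
            = (∫ x, (1:ℝ)/2 * (x ⬝ᵥ b i) ^ 4 ∂μ)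
              + (∫ x, 3 * ((x ⬝ᵥ b i) ^ 2 * (x ⬝ᵥ b j) ^ 2) ∂μ)
              + ∫ x, (1:ℝ)/2 * (x ⬝ᵥ b j) ^ 4 ∂μ :=
          integral_three μ _ _ _
            ((integrable_pow μ hsphere (hunit i) 4).const_mul _)
            ((integrable_dots μ hsphere (hunit i) (hunit j) 2 2).const_mul _)
            ((integrable_pow μ hsphere (hunit j) 4).const_mul _)
        rw [h3, integral_const_mul, integral_const_mul, integral_const_mul]
      rw [hint] at hint2
      rw [hQ4 i hi, hQ4 j hj] at hint2
      linarith
    set J := (Finset.univ : Finset (Fin p)).erase i₀ with hJ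
    have hJcard : J.card = p - 1 := by
      rw [hJ, Finset.card_erase_of_mem (Finset.mem_univ _), Finset.card_univ, Fintype.card_fin]
    have hJcardR : (J.card : ℝ) = (p : ℝ) - 1 := by
      rw [hJcard, Nat.cast_sub (by omega)]
      norm_num
    have hparsJ : ∀ x : Fin p → ℝ, ∑ i ∈ J, (x ⬝ᵥ b i) ^ 2 = x ⬝ᵥ x - (x ⬝ᵥ θ) ^ 2 := by
      intro x
      have h := hpars x
      rw [← Finset.add_sum_erase _ _ (Finset.mem_univ i₀), hb0'] at h
      rw [hJ]
      linarith
    have hD1 : ((p : ℝ) - 1) * T = e2 - e4 := by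
      have h1 : ∫ x, (∑ i ∈ J, (x ⬝ᵥ θ) ^ 2 * (x ⬝ᵥ b i) ^ 2) ∂μ = ∑ i ∈ J, T := by
        rw [integral_finset_sum _ (fun i _ => integrable_dots μ hsphere hθ (hunit i) 2 2)]
        exact Finset.sum_congr rfl fun i hi =>
          hsame2 _ (hunit i) (hperpθ i (Finset.ne_of_mem_erase hi))
      have h2 : ∫ x, (∑ i ∈ J, (x ⬝ᵥ θ) ^ 2 * (x ⬝ᵥ b i) ^ 2) ∂μ
          = ∫ x, ((x ⬝ᵥ θ) ^ 2 - (x ⬝ᵥ θ) ^ 4) ∂μ := by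
        apply integral_congr_ae
        filter_upwards [hsphere] with x hx
        rw [← Finset.mul_sum, hparsJ x, hx]
        ring
      have h3 : ∫ x, ((x ⬝ᵥ θ) ^ 2 - (x ⬝ᵥ θ) ^ 4) ∂μ = e2 - e4 :=
        integral_sub (integrable_pow μ hsphere hθ 2) (integrable_pow μ hsphere hθ 4)
      rw [h2, h3, Finset.sum_const, nsmul_eq_mul, hJcardR] at h1
      linarith
    have hD2 : 3 * f4 = ((p : ℝ) ^ 2 - 1) * Q := by
      have h1 : ∫ x, (∑ i ∈ J, ∑ j ∈ J, (x ⬝ᵥ b i) ^ 2 * (x ⬝ᵥ b j) ^ 2) ∂μ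
          = ∑ i ∈ J, ∑ j ∈ J, ∫ x, (x ⬝ᵥ b i) ^ 2 * (x ⬝ᵥ b j) ^ 2 ∂μ := by
        rw [integral_finset_sum _ (fun i _ => integrable_finset_sum _
          (fun j _ => integrable_dots μ hsphere (hunit i) (hunit j) 2 2))]
        exact Finset.sum_congr rfl fun i hi => integral_finset_sum _
          (fun j _ => integrable_dots μ hsphere (hunit i) (hunit j) 2 2)
      have h2 : ∫ x, (∑ i ∈ J, ∑ j ∈ J, (x ⬝ᵥ b i) ^ 2 * (x ⬝ᵥ b j) ^ 2) ∂μ = f4 := by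
        rw [hf4]
        apply integral_congr_ae
        filter_upwards [hsphere] with x hx
        rw [← Finset.sum_mul_sum, hparsJ x, hx]
        ring
      have h3 : ∑ i ∈ J, ∑ j ∈ J, ∫ x, (x ⬝ᵥ b i) ^ 2 * (x ⬝ᵥ b j) ^ 2 ∂μ
          = ((p : ℝ) - 1) * (Q + ((p : ℝ) - 2) * (Q / 3)) := by
        have hinner : ∀ i ∈ J, ∑ j ∈ J, ∫ x, (x ⬝ᵥ b i) ^ 2 * (x ⬝ᵥ b j) ^ 2 ∂μ
            = Q + ((p : ℝ) - 2) * (Q / 3) := by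
          intro i hi
          rw [← Finset.add_sum_erase _ _ hi]
          congr 1
          · have h4 : ∫ x, (x ⬝ᵥ b i) ^ 2 * (x ⬝ᵥ b i) ^ 2 ∂μ = ∫ x, (x ⬝ᵥ b i) ^ 4 ∂μ := by
              congr 1; funext x; ring
            rw [h4]
            exact hQ4 i (Finset.ne_of_mem_erase hi)
          · have hval : ∀ j ∈ J.erase i, ∫ x, (x ⬝ᵥ b i) ^ 2 * (x ⬝ᵥ b j) ^ 2 ∂μ = Q / 3 := by
              intro j hj
              exact hcross i j (Ne.symm (Finset.ne_of_mem_erase hj))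
                (Finset.ne_of_mem_erase hi)
                (Finset.ne_of_mem_erase (Finset.mem_of_mem_erase hj))
            rw [Finset.sum_congr rfl hval, Finset.sum_const, nsmul_eq_mul,
              Finset.card_erase_of_mem hi, hJcard]
            congr 1
            rw [Nat.cast_sub (by omega)]
            rw [Nat.cast_sub (by omega)]
            push_cast
            ring
        rw [Finset.sum_congr rfl hinner, Finset.sum_const, nsmul_eq_mul, hJcardR]
      rw [h2] at h1
      rw [h3] at h1
      rw [h1]
      ring
    obtain ⟨O, hO, hdet, hfix, hflip⟩ := exists_flip hp hθ hηη hηθ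
    have hOw : O *ᵥ (c • θ - s • η) = θ₀ := by
      rw [mulVec_sub, mulVec_smul, mulVec_smul, hfix, hflip, smul_neg, sub_neg_eq_add, hθ₀eq]
    have hU1 : ∫ x, (x ⬝ᵥ θ₀) ^ 4 ∂μ = ∫ x, (x ⬝ᵥ (c • θ - s • η)) ^ 4 ∂μ := by
      have h := moment_inv μ θ hrot hO hdet hfix hOw 0 4
      simpa using h
    have hdot2 : ∀ x : Fin p → ℝ, x ⬝ᵥ (c • θ - s • η) = c * (x ⬝ᵥ θ) - s * (x ⬝ᵥ η) := by
      intro x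
      rw [dotProduct_sub, dotProduct_smul, dotProduct_smul, smul_eq_mul, smul_eq_mul]
    have hwu : (c • θ - s • η) ⬝ᵥ (c • θ - s • η) = 1 := by
      have hθη : θ ⬝ᵥ η = 0 := by rw [dotProduct_comm]; exact hηθ
      simp only [sub_dotProduct, dotProduct_sub, dotProduct_smul, smul_dotProduct, smul_eq_mul,
        hθ, hηη, hθη, hηθ]
      nlinarith [hs2]
    have hsum : ∫ x, ((x ⬝ᵥ θ₀) ^ 4 + (x ⬝ᵥ (c • θ - s • η)) ^ 4) ∂μ
        = (2 * c ^ 4) * e4 + (12 * c ^ 2 * s ^ 2) * T + (2 * s ^ 4) * Q := by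
      have heq : (fun x => (x ⬝ᵥ θ₀) ^ 4 + (x ⬝ᵥ (c • θ - s • η)) ^ 4)
          = fun x => (2 * c ^ 4) * (x ⬝ᵥ θ) ^ 4
            + (12 * c ^ 2 * s ^ 2) * ((x ⬝ᵥ θ) ^ 2 * (x ⬝ᵥ η) ^ 2)
            + (2 * s ^ 4) * ((x ⬝ᵥ θ) ^ 0 * (x ⬝ᵥ η) ^ 4) := by
        funext x
        rw [hdot x, hdot2 x, pow_zero, one_mul]
        ring
      rw [heq]
      have h3 : ∫ x, ((2 * c ^ 4) * (x ⬝ᵥ θ) ^ 4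
            + (12 * c ^ 2 * s ^ 2) * ((x ⬝ᵥ θ) ^ 2 * (x ⬝ᵥ η) ^ 2)
            + (2 * s ^ 4) * ((x ⬝ᵥ θ) ^ 0 * (x ⬝ᵥ η) ^ 4)) ∂μ
          = (∫ x, (2 * c ^ 4) * (x ⬝ᵥ θ) ^ 4 ∂μ)
            + (∫ x, (12 * c ^ 2 * s ^ 2) * ((x ⬝ᵥ θ) ^ 2 * (x ⬝ᵥ η) ^ 2) ∂μ)
            + ∫ x, (2 * s ^ 4) * ((x ⬝ᵥ θ) ^ 0 * (x ⬝ᵥ η) ^ 4) ∂μ :=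
        integral_three μ _ _ _
          ((integrable_pow μ hsphere hθ 4).const_mul _)
          ((integrable_dots μ hsphere hθ hηη 2 2).const_mul _)
          ((integrable_dots μ hsphere hθ hηη 0 4).const_mul _)
      rw [h3, integral_const_mul, integral_const_mul, integral_const_mul]
    have hsplit : ∫ x, ((x ⬝ᵥ θ₀) ^ 4 + (x ⬝ᵥ (c • θ - s • η)) ^ 4) ∂μ
        = (∫ x, (x ⬝ᵥ θ₀) ^ 4 ∂μ) + ∫ x, (x ⬝ᵥ (c • θ - s • η)) ^ 4 ∂μ :=
      integral_add (integrable_pow μ hsphere hθ₀ 4) (integrable_pow μ hsphere hwu 4)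
    have hLHS2 : ∫ x, (x ⬝ᵥ θ₀) ^ 4 ∂μ
        = c ^ 4 * e4 + 6 * c ^ 2 * s ^ 2 * T + s ^ 4 * Q := by
      rw [hsplit, ← hU1] at hsum
      linarith
    rw [hLHS2]
    have hp1 : (p : ℝ) - 1 ≠ 0 := by
      have h3p : (3 : ℝ) ≤ (p : ℝ) := by exact_mod_cast hp
      intro h; linarith
    have hp2 : (p : ℝ) ^ 2 - 1 ≠ 0 := by
      have h3p : (3 : ℝ) ≤ (p : ℝ) := by exact_mod_cast hp
      intro h; nlinarith
    have he24 : e2 - e4 = ((p : ℝ) - 1) * T := hD1.symm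
    have hf4Q : f4 = ((p : ℝ) ^ 2 - 1) * Q / 3 := by linarith
    rw [he24, hf4Q, ← hs2]
    field_simp
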